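/- arXiv:1805.09408 — 2 statements merged into one kernel-verified Lean document; each statement's English description precedes it below -/
import Mathlib

section
/- Let ε > 0, p > 0, let Ω ⊂ ℝ² be a bounded measurable set, let w : ℝ² → ℝ be a nonnegative bounded measurable even function, and let u : Ω → ℝ be a bounded measurable function. Then ∫_Ω K_{ε,p}(u)(x) · u(x)⁻ dx ≥ 0, where u(x)⁻ = −min(u(x),0). -/
open Real MeasureTheory

/-- The differential kernel `k_{ε,p}(s) = s (s² + ε²)^((p−2)/2)`. -/
noncomputable def kKer (ε p s : ℝ) : ℝ := s * (s ^ 2 + ε ^ 2) ^ ((p - 2) / 2)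

/-- `v` is bounded and measurable (bounded on `Ω`). -/
def BddMeas (Ω : Set (ℝ × ℝ)) (v : ℝ × ℝ → ℝ) : Prop :=
  Measurable v ∧ ∃ M, ∀ x ∈ Ω, |v x| ≤ M

/-- The nonlocal diffusion operator `K_{ε,p}(v)(x) = ∫_Ω w(x−y) k_{ε,p}(v(y)−v(x)) dy`. -/
noncomputable def Knl (ε p : ℝ) (w : ℝ × ℝ → ℝ) (Ω : Set (ℝ × ℝ)) (v : ℝ × ℝ → ℝ)
    (x : ℝ × ℝ) : ℝ :=
  ∫ y in Ω, w (x - y) * kKer ε p (v y - v x)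

lemma kKer_neg (ε p s : ℝ) : kKer ε p (-s) = - kKer ε p s := by
  unfold kKer; rw [neg_sq]; ring

lemma kKer_cont (ε p : ℝ) (hε : 0 < ε) : Continuous (kKer ε p) := by
  unfold kKer
  exact continuous_id.mul (Continuous.rpow_const (by continuity) fun s => Or.inl (by positivity))

lemma key_pt (a b : ℝ) : 0 ≤ (b - a) * (min b 0 - min a 0) := by
  rcases le_total a b with h | h
  · have h2 : min a 0 ≤ min b 0 := min_le_min h le_rfl
    exact mul_nonneg (by linarith) (by linarith)
  · have h2 : min b 0 ≤ min a 0 := min_le_min h le_rfl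
    nlinarith

lemma abs_min_le_abs (a : ℝ) : |min a 0| ≤ |a| := by
  rcases le_total a 0 with h | h
  · rw [min_eq_left h]
  · rw [min_eq_right h, abs_zero]; exact abs_nonneg a

noncomputable def Fnl (ε p : ℝ) (w u : ℝ × ℝ → ℝ) (z : (ℝ × ℝ) × (ℝ × ℝ)) : ℝ :=
  w (z.1 - z.2) * kKer ε p (u z.2 - u z.1) * (-min (u z.1) 0)

lemma Fnl_meas (ε p : ℝ) (hε : 0 < ε) (w u : ℝ × ℝ → ℝ) (hwm : Measurable w)
    (hum : Measurable u) : Measurable (Fnl ε p w u) := by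
  refine ((hwm.comp (measurable_fst.sub measurable_snd)).mul
    ((kKer_cont ε p hε).measurable.comp
      ((hum.comp measurable_snd).sub (hum.comp measurable_fst)))).mul ?_
  exact ((hum.comp measurable_fst).min measurable_const).neg

lemma Fnl_add_swap_nonneg (ε p : ℝ) (w u : ℝ × ℝ → ℝ) (hwnn : ∀ z, 0 ≤ w z)
    (hwe : ∀ z, w (-z) = w z) (z : (ℝ × ℝ) × (ℝ × ℝ)) :
    0 ≤ Fnl ε p w u z + Fnl ε p w u z.swap := by
  have hw : w (z.2 - z.1) = w (z.1 - z.2) := by rw [← neg_sub]; exact hwe _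
  have hk : kKer ε p (u z.1 - u z.2) = - kKer ε p (u z.2 - u z.1) := by
    rw [← neg_sub (u z.2) (u z.1), kKer_neg]
  simp only [Fnl, Prod.fst_swap, Prod.snd_swap, hw, hk]
  have heq : w (z.1 - z.2) * kKer ε p (u z.2 - u z.1) * (-min (u z.1) 0) +
      w (z.1 - z.2) * (- kKer ε p (u z.2 - u z.1)) * (-min (u z.2) 0) =
      w (z.1 - z.2) * (((u z.2 - u z.1) * (min (u z.2) 0 - min (u z.1) 0)) *
        ((u z.2 - u z.1) ^ 2 + ε ^ 2) ^ ((p - 2) / 2)) := by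
    unfold kKer; ring
  rw [heq]
  exact mul_nonneg (hwnn _) (mul_nonneg (key_pt _ _) (Real.rpow_nonneg (by positivity) _))

theorem nonlocal_negPart_nonneg (ε p : ℝ) (hε : 0 < ε) (hp : 0 < p)
    (Ω : Set (ℝ × ℝ)) (hΩm : MeasurableSet Ω) (hΩb : Bornology.IsBounded Ω)
    (w : ℝ × ℝ → ℝ) (hwm : Measurable w) (hwnn : ∀ z, 0 ≤ w z)
    (hwbd : ∃ M, ∀ z, |w z| ≤ M) (hwe : ∀ z, w (-z) = w z)
    (u : ℝ × ℝ → ℝ) (hu : BddMeas Ω u) :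
    0 ≤ ∫ x in Ω, Knl ε p w Ω u x * (-min (u x) 0) := by
  obtain ⟨hum, M, hM⟩ := hu
  obtain ⟨Mw, hMw⟩ := hwbd
  set μ : Measure (ℝ × ℝ) := volume.restrict Ω with hμ
  haveI : IsFiniteMeasure μ := ⟨by rw [hμ, Measure.restrict_apply_univ]; exact hΩb.measure_lt_top⟩
  set Pi2 : Measure ((ℝ × ℝ) × (ℝ × ℝ)) := μ.prod μ with hPi2
  set M' : ℝ := max M 0 with hM'
  have hM'nn : 0 ≤ M' := le_max_right _ _
  have hMu : ∀ x ∈ Ω, |u x| ≤ M' := fun x hx => (hM x hx).trans (le_max_left _ _)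
  obtain ⟨C, hC⟩ := isCompact_Icc.exists_bound_of_continuousOn (s := Set.Icc (-(2*M')) (2*M'))
    ((kKer_cont ε p hε).continuousOn)
  have hMwnn : 0 ≤ Mw := (abs_nonneg _).trans (hMw 0)
  have hCnn : 0 ≤ C := (norm_nonneg _).trans (hC 0 ⟨by linarith, by linarith⟩)
  have hae : ∀ᵐ z ∂Pi2, z ∈ Ω ×ˢ Ω := by
    rw [hPi2, hμ, Measure.prod_restrict]
    exact ae_restrict_mem (hΩm.prod hΩm)
  set F := Fnl ε p w u with hF
  have hbd : ∀ z ∈ Ω ×ˢ Ω, ‖F z‖ ≤ Mw * C * M' := by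
    rintro z ⟨hz1, hz2⟩
    have ha := abs_le.1 (hMu _ hz1)
    have hb := abs_le.1 (hMu _ hz2)
    have h1 : u z.2 - u z.1 ∈ Set.Icc (-(2*M')) (2*M') := ⟨by linarith, by linarith⟩
    have hk : |kKer ε p (u z.2 - u z.1)| ≤ C := hC _ h1
    have hne : |-min (u z.1) 0| ≤ M' := by
      rw [abs_neg]; exact (abs_min_le_abs _).trans (hMu _ hz1)
    rw [hF, Fnl, Real.norm_eq_abs, abs_mul, abs_mul]
    exact mul_le_mul (mul_le_mul (hMw _) hk (abs_nonneg _) hMwnn) hne (abs_nonneg _)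
      (mul_nonneg hMwnn hCnn)
  have hFm : Measurable F := Fnl_meas ε p hε w u hwm hum
  have hFint : Integrable F Pi2 :=
    ⟨hFm.aestronglyMeasurable, HasFiniteIntegral.of_bounded (hae.mono fun z hz => hbd z hz)⟩
  have hGint : Integrable (fun z => F z.swap) Pi2 := by
    refine ⟨(hFm.comp measurable_swap).aestronglyMeasurable,
      HasFiniteIntegral.of_bounded (C := Mw * C * M') (hae.mono fun z hz => ?_)⟩
    exact hbd z.swap ⟨hz.2, hz.1⟩
  have h1 : (∫ x in Ω, Knl ε p w Ω u x * (-min (u x) 0)) = ∫ x, (∫ y, F (x, y) ∂μ) ∂μ := by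
    refine integral_congr_ae (Filter.Eventually.of_forall fun x => ?_)
    show Knl ε p w Ω u x * (-min (u x) 0) = ∫ y, F (x, y) ∂μ
    rw [Knl]
    exact (integral_mul_const _ _).symm
  have h2 : ∫ x, (∫ y, F (x, y) ∂μ) ∂μ = ∫ z, F z ∂Pi2 := (integral_prod F hFint).symm
  have hswap : ∫ z, F z.swap ∂Pi2 = ∫ z, F z ∂Pi2 :=
    (Measure.measurePreserving_swap (μ := μ) (ν := μ)).integral_comp
      (MeasurableEquiv.prodComm (α := ℝ × ℝ) (β := ℝ × ℝ)).measurableEmbedding F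
  have h3 : ∫ z, (F z + F z.swap) ∂Pi2 = (∫ z, F z ∂Pi2) + ∫ z, F z.swap ∂Pi2 :=
    integral_add hFint hGint
  have h4 : 0 ≤ ∫ z, (F z + F z.swap) ∂Pi2 :=
    integral_nonneg fun z => Fnl_add_swap_nonneg ε p w u hwnn hwe z
  rw [h1, h2]
  linarith
end

section
/- Let T > 0, r > 0, c ≥ 0 and D ≥ 0. Suppose y : [0,T] → ℝ is differentiable with y(0) = 0, y(t) ≥ 0 for all t ∈ [0,T], and y′(t) + (1/r)·y(t) ≤ c·y(t) + D for all t ∈ [0,T]. Then ∫₀ᵀ y(t) dt ≤ C(T) · r · D, where C(T) = ∫₀ᵀ (c·t·e^{ct} + 1) dt; in particular the bound on ∫₀ᵀ y(t) dt is proportional to r with a constant depending only on c and T. -/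
lemma exp_le_mul_exp_add_one (x : ℝ) (hx : 0 ≤ x) :
    Real.exp x ≤ x * Real.exp x + 1 := by
  have h := Real.add_one_le_exp (-x)
  have hp := Real.exp_pos x
  have hmul : Real.exp (-x) * Real.exp x = 1 := by
    rw [← Real.exp_add]; simp
  nlinarith

theorem gronwall_integral_bound (T r c D : ℝ) (hT : 0 < T) (hr : 0 < r) (hc : 0 ≤ c)
    (hD : 0 ≤ D) (y y' : ℝ → ℝ) (hy : ∀ t ∈ Set.Icc (0:ℝ) T, HasDerivAt y (y' t) t)
    (h0 : y 0 = 0) (hnn : ∀ t ∈ Set.Icc (0:ℝ) T, 0 ≤ y t)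
    (hineq : ∀ t ∈ Set.Icc (0:ℝ) T, y' t + (1/r) * y t ≤ c * y t + D) :
    ∫ t in (0:ℝ)..T, y t ≤ (∫ t in (0:ℝ)..T, (c * t * Real.exp (c * t) + 1)) * r * D := by
  have hy_cont : ContinuousOn y (Set.Icc 0 T) := fun t ht =>
    (hy t ht).continuousAt.continuousWithinAt
  -- key pointwise bound
  have key : ∀ t ∈ Set.Icc (0:ℝ) T, y t ≤ r * D * Real.exp (c * t) := by
    intro t ht
    have hb : ∀ ε : ℝ, 0 < ε → y t ≤ r * D * Real.exp (c * t) + ε * Real.exp ((c + 1) * t) := by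
      intro ε hε
      have hBd : ∀ s : ℝ, HasDerivAt
          (fun s => r * D * Real.exp (c * s) + ε * Real.exp ((c + 1) * s))
          (r * D * (c * Real.exp (c * s)) + ε * ((c + 1) * Real.exp ((c + 1) * s))) s := by
        intro s
        have h1 : HasDerivAt (fun s : ℝ => Real.exp (c * s)) (c * Real.exp (c * s)) s := by
          simpa [mul_comm] using ((hasDerivAt_id s).const_mul c).exp
        have h2 : HasDerivAt (fun s : ℝ => Real.exp ((c + 1) * s))
            ((c + 1) * Real.exp ((c + 1) * s)) s := by
          simpa [mul_comm] using ((hasDerivAt_id s).const_mul (c + 1)).exp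
        exact (h1.const_mul (r * D)).add (h2.const_mul ε)
      have := image_le_of_deriv_right_lt_deriv_boundary hy_cont
        (fun x hx => (hy x (Set.Ico_subset_Icc_self hx)).hasDerivWithinAt)
        (by
          rw [h0]
          positivity)
        hBd
        (by
          intro x hx hxB
          have hx' : x ∈ Set.Icc (0:ℝ) T := Set.Ico_subset_Icc_self hx
          have h1 := hineq x hx'
          have he1 : (1:ℝ) ≤ Real.exp (c * x) := Real.one_le_exp (mul_nonneg hc hx'.1)
          have he2 : (0:ℝ) < Real.exp ((c + 1) * x) := Real.exp_pos _
          have hinv : 0 < 1 / r := by positivity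
          have hBr : 1 / r * (r * D * Real.exp (c * x) + ε * Real.exp ((c + 1) * x))
              = D * Real.exp (c * x) + 1 / r * (ε * Real.exp ((c + 1) * x)) := by
            field_simp
          rw [hxB] at h1
          nlinarith [mul_pos hinv (mul_pos hε he2), hBr,
            le_mul_of_one_le_right hD he1])
        ht
      simpa using this
    -- pass to the limit ε → 0
    refine le_of_forall_pos_le_add ?_
    intro ε' hε'
    have heT : (0:ℝ) < Real.exp ((c + 1) * T) := Real.exp_pos _
    have h := hb (ε' / Real.exp ((c + 1) * T)) (by positivity)
    have hle : Real.exp ((c + 1) * t) ≤ Real.exp ((c + 1) * T) :=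
      Real.exp_le_exp.mpr (by nlinarith [ht.1, ht.2])
    calc y t ≤ r * D * Real.exp (c * t) + ε' / Real.exp ((c + 1) * T) * Real.exp ((c + 1) * t) := h
      _ ≤ r * D * Real.exp (c * t) + ε' := by
          have : ε' / Real.exp ((c + 1) * T) * Real.exp ((c + 1) * t) ≤ ε' := by
            rw [div_mul_eq_mul_div, div_le_iff₀ heT]
            nlinarith
          linarith
  -- integrate
  have hint_y : IntervalIntegrable y MeasureTheory.volume 0 T := by
    apply ContinuousOn.intervalIntegrable
    rwa [Set.uIcc_of_le hT.le]
  have hint_g : IntervalIntegrable (fun t => (c * t * Real.exp (c * t) + 1) * (r * D))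
      MeasureTheory.volume 0 T := by
    apply Continuous.intervalIntegrable
    continuity
  have h2 : ∫ t in (0:ℝ)..T, y t
      ≤ ∫ t in (0:ℝ)..T, (c * t * Real.exp (c * t) + 1) * (r * D) := by
    apply intervalIntegral.integral_mono_on hT.le hint_y hint_g
    intro t ht
    have h1 := key t ht
    have h3 := exp_le_mul_exp_add_one (c * t) (mul_nonneg hc ht.1)
    have hr0 : 0 ≤ r * D := by positivity
    nlinarith [mul_le_mul_of_nonneg_left h3 hr0]
  rw [intervalIntegral.integral_mul_const] at h2
  rw [mul_assoc]
  exact h2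
end
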